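/- Let p be a prime and let g ∈ 𝔽_p[[z]] be algebraic over 𝔽_p(z), i.e. there exist polynomials q_0,…,q_m ∈ 𝔽_p[z], not all zero, such that Σ_{i=0}^{m} q_i(z)·g(z)^i = 0 in 𝔽_p[[z]]. Then there exists an integer l > 0 such that Λ_p^{2l}(g) = Λ_p^{l}(g). -/

import Mathlib

/-- The Cartier-type operator `Λ_p` on `K[[z]]`, sending `∑ a(n) zⁿ` to `∑ a(np) zⁿ`. -/
noncomputable def cartier {K : Type*} [Semiring K] (p : ℕ) (f : PowerSeries K) :
    PowerSeries K :=
  PowerSeries.mk fun n => PowerSeries.coeff (n * p) f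

open PowerSeries Polynomial Finset

variable {p : ℕ}

lemma charP_ps [Fact p.Prime] : CharP (PowerSeries (ZMod p)) p :=
  charP_of_injective_ringHom (f := PowerSeries.C (R := ZMod p))
    (fun a b h => by simpa using congrArg (PowerSeries.constantCoeff) h) p

lemma coeff_pow_p [hp : Fact p.Prime] (f : PowerSeries (ZMod p)) (n : ℕ) :
    PowerSeries.coeff n (f ^ p) = if p ∣ n then PowerSeries.coeff (n / p) f else 0 := by
  haveI := @charP_ps p _
  have hp0 : 0 < p := hp.out.pos
  set T := trunc (n+1) f with hT
  have hdvd : (PowerSeries.X : PowerSeries (ZMod p))^(n+1) ∣ f - (T : PowerSeries (ZMod p)) := by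
    rw [PowerSeries.X_pow_dvd_iff]
    intro m hm
    simp [hT, Polynomial.coeff_coe, coeff_trunc, hm]
  obtain ⟨r, hr⟩ := hdvd
  have hf : f = (T : PowerSeries (ZMod p)) + PowerSeries.X^(n+1) * r := by
    rw [← hr]; ring
  have hfp : f ^ p = (T : PowerSeries (ZMod p))^p + (PowerSeries.X^(n+1))^p * r^p := by
    rw [hf, add_pow_char, mul_pow]
  have hTp : (T : PowerSeries (ZMod p))^p = ((Polynomial.expand _ p T : Polynomial (ZMod p)) : PowerSeries (ZMod p)) := by
    rw [← Polynomial.coe_pow, ← Polynomial.map_frobenius_expand, ZMod.frobenius_zmod, Polynomial.map_id]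
  have h2 : PowerSeries.coeff n ((PowerSeries.X^(n+1))^p * r^p : PowerSeries (ZMod p)) = 0 := by
    rw [← pow_mul]
    have : (PowerSeries.X : PowerSeries (ZMod p))^((n+1)*p) ∣ PowerSeries.X^((n+1)*p) * r^p :=
      Dvd.intro _ rfl
    rw [PowerSeries.X_pow_dvd_iff] at this
    exact this n (by nlinarith)
  rw [hfp, map_add, h2, add_zero, hTp, Polynomial.coeff_coe, Polynomial.coeff_expand hp0]
  split_ifs with h
  · rw [hT, coeff_trunc]
    have : n / p < n + 1 := Nat.lt_succ_of_le (Nat.div_le_self n p)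
    simp [this]
  · rfl

lemma cartier_coeff {K : Type*} [Semiring K] (f : PowerSeries K) (n : ℕ) :
    PowerSeries.coeff n (cartier p f) = PowerSeries.coeff (n * p) f := by
  simp [cartier]

lemma cartier_mul_pow [hp : Fact p.Prime] (F h : PowerSeries (ZMod p)) :
    cartier p (F * h ^ p) = cartier p F * h := by
  have hp0 : 0 < p := hp.out.pos
  ext n
  rw [cartier_coeff, PowerSeries.coeff_mul, PowerSeries.coeff_mul]
  have step1 : ∀ x ∈ antidiagonal (n * p),
      PowerSeries.coeff x.1 F * PowerSeries.coeff x.2 (h ^ p)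
      = if p ∣ x.2 then PowerSeries.coeff x.1 F * PowerSeries.coeff (x.2 / p) h else 0 := by
    intro x _
    rw [coeff_pow_p, mul_ite, mul_zero]
  have step2 : ∀ y ∈ antidiagonal n,
      PowerSeries.coeff y.1 (cartier p F) * PowerSeries.coeff y.2 h
      = PowerSeries.coeff (y.1 * p) F * PowerSeries.coeff y.2 h := by
    intro y _
    rw [cartier_coeff]
  rw [Finset.sum_congr rfl step1, ← Finset.sum_filter, Finset.sum_congr rfl step2]
  refine Finset.sum_nbij' (fun x : ℕ × ℕ => (x.1 / p, x.2 / p))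
    (fun y : ℕ × ℕ => (y.1 * p, y.2 * p)) ?_ ?_ ?_ ?_ ?_
  · intro x hx
    rw [Finset.mem_filter, Finset.HasAntidiagonal.mem_antidiagonal] at hx
    obtain ⟨hsum, hd2⟩ := hx
    have hd1 : p ∣ x.1 := by
      rcases hd2 with ⟨c2, hc2⟩
      refine ⟨n - c2, ?_⟩
      have : c2 ≤ n := by nlinarith
      calc x.1 = n * p - x.2 := by omega
        _ = p * (n - c2) := by rw [hc2]; rw [Nat.mul_sub]; ring_nf
    rw [Finset.HasAntidiagonal.mem_antidiagonal]
    obtain ⟨c1, hc1⟩ := hd1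
    obtain ⟨c2, hc2⟩ := hd2
    simp only [hc1, hc2, Nat.mul_div_cancel_left _ hp0]
    have h' : p * c1 + p * c2 = p * n := by rw [← hc1, ← hc2, hsum, Nat.mul_comm]
    rw [← Nat.mul_add] at h'
    exact Nat.eq_of_mul_eq_mul_left hp0 h'
  · intro y hy
    rw [Finset.HasAntidiagonal.mem_antidiagonal] at hy
    rw [Finset.mem_filter, Finset.HasAntidiagonal.mem_antidiagonal]
    exact ⟨by rw [← add_mul, hy], dvd_mul_left p y.2⟩
  · intro x hx
    rw [Finset.mem_filter] at hx
    obtain ⟨hmem, hd2⟩ := hx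
    rw [Finset.HasAntidiagonal.mem_antidiagonal] at hmem
    have hd1 : p ∣ x.1 := by
      rcases hd2 with ⟨c2, hc2⟩
      refine ⟨n - c2, ?_⟩
      have : c2 ≤ n := by nlinarith
      calc x.1 = n * p - x.2 := by omega
        _ = p * (n - c2) := by rw [hc2]; rw [Nat.mul_sub]; ring_nf
    simp only [Nat.div_mul_cancel hd1, Nat.div_mul_cancel hd2]
  · intro y _
    simp only [Nat.mul_div_cancel _ hp0]
  · intro x hx
    rw [Finset.mem_filter] at hx
    obtain ⟨hmem, hd2⟩ := hx
    rw [Finset.HasAntidiagonal.mem_antidiagonal] at hmem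
    have hd1 : p ∣ x.1 := by
      rcases hd2 with ⟨c2, hc2⟩
      refine ⟨n - c2, ?_⟩
      have : c2 ≤ n := by nlinarith
      calc x.1 = n * p - x.2 := by omega
        _ = p * (n - c2) := by rw [hc2]; rw [Nat.mul_sub]; ring_nf
    simp only [Nat.div_mul_cancel hd1]

lemma cartier_one [hp : Fact p.Prime] : cartier p (1 : PowerSeries (ZMod p)) = 1 := by
  have hp0 : 0 < p := hp.out.pos
  ext n
  rw [cartier_coeff, PowerSeries.coeff_one, PowerSeries.coeff_one]
  by_cases hn : n = 0 <;> simp [hn, hp0.ne']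

lemma cartier_pow_p [hp : Fact p.Prime] (h : PowerSeries (ZMod p)) : cartier p (h ^ p) = h := by
  have := cartier_mul_pow (p := p) 1 h
  rwa [one_mul, cartier_one, one_mul] at this

lemma cartier_sum {K : Type*} [Semiring K] {ι : Type*} (s : Finset ι) (f : ι → PowerSeries K) :
    cartier p (∑ i ∈ s, f i) = ∑ i ∈ s, cartier p (f i) := by
  ext n
  rw [cartier_coeff, map_sum, map_sum]
  exact Finset.sum_congr rfl fun i _ => (cartier_coeff (f i) n).symm

noncomputable def pcart (p : ℕ) {K : Type*} [Semiring K] (S : Polynomial K) : Polynomial K :=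
  ∑ j ∈ range (S.natDegree + 1), Polynomial.monomial j (S.coeff (j * p))

lemma pcart_coeff {K : Type*} [Semiring K] (hp0 : 0 < p) (S : Polynomial K) (j : ℕ) :
    (pcart p S).coeff j = S.coeff (j * p) := by
  rw [pcart, Polynomial.finset_sum_coeff]
  simp only [Polynomial.coeff_monomial]
  rw [Finset.sum_ite_eq' (range (S.natDegree + 1)) j]
  split_ifs with h
  · rfl
  · rw [Finset.mem_range, not_lt] at h
    symm
    apply Polynomial.coeff_eq_zero_of_natDegree_lt
    calc S.natDegree < S.natDegree + 1 := Nat.lt_succ_self _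
      _ ≤ j := h
      _ ≤ j * p := Nat.le_mul_of_pos_right _ hp0

lemma pcart_coe (hp0 : 0 < p) {K : Type*} [CommSemiring K] (S : Polynomial K) :
    ((pcart p S : Polynomial K) : PowerSeries K) = cartier p (S : PowerSeries K) := by
  ext n
  rw [Polynomial.coeff_coe, cartier_coeff, Polynomial.coeff_coe, pcart_coeff hp0]

lemma pcart_natDegree_le (hp0 : 0 < p) {K : Type*} [Semiring K] (S : Polynomial K) (d : ℕ)
    (hS : S.natDegree ≤ p * d) : (pcart p S).natDegree ≤ d := by
  rw [Polynomial.natDegree_le_iff_coeff_eq_zero]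
  intro m hm
  rw [pcart_coeff hp0]
  apply Polynomial.coeff_eq_zero_of_natDegree_lt
  calc S.natDegree ≤ p * d := hS
    _ < p * m := Nat.mul_lt_mul_of_pos_left hm hp0
    _ = m * p := Nat.mul_comm _ _

lemma ore_periodic [hp : Fact p.Prime] (u : PowerSeries (ZMod p)) (b : Polynomial (ZMod p))
    (a : ℕ → Polynomial (ZMod p)) (N : ℕ) (hb : b ≠ 0)
    (hrel : (b : PowerSeries (ZMod p)) * u
      = ∑ k ∈ range N, ((a (k+1) : PowerSeries (ZMod p)) * u ^ (p ^ (k+1)))) :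
    ∃ i j : ℕ, i < j ∧ (cartier p)^[i] u = (cartier p)^[j] u := by
  haveI : NeZero p := ⟨hp.out.ne_zero⟩
  have hp0 : 0 < p := hp.out.pos
  have hp2 : 2 ≤ p := hp.out.two_le
  set d : ℕ := max b.natDegree ((range N).sup fun k => (a (k+1)).natDegree) with hd
  have hbd : b.natDegree ≤ d := le_max_left _ _
  have had : ∀ k ∈ range N, (a (k+1)).natDegree ≤ d := by
    intro k hk
    have h1 : (a (k+1)).natDegree ≤ (range N).sup fun k => (a (k+1)).natDegree :=
      Finset.le_sup (f := fun k => (a (k+1)).natDegree) hk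
    exact le_trans h1 (le_max_right _ _)
  set Good : PowerSeries (ZMod p) → Prop := fun h => ∃ P : ℕ → Polynomial (ZMod p),
    (∀ k, (P k).natDegree ≤ d) ∧
    (b : PowerSeries (ZMod p)) * h
      = ∑ k ∈ range (N+1), ((P k : PowerSeries (ZMod p)) * u ^ (p^k)) with hGoodDef
  have hGood_u : Good u := by
    refine ⟨fun k => if k = 0 ∨ N < k then 0 else a k, ?_, ?_⟩
    · intro k
      dsimp only
      split_ifs with h
      · simp
      · push_neg at h
        have hk : k - 1 ∈ range N := mem_range.mpr (by omega)
        have := had _ hk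
        have e : k - 1 + 1 = k := by omega
        rwa [e] at this
    · rw [Finset.sum_range_succ']
      dsimp only
      rw [if_pos (Or.inl rfl), Polynomial.coe_zero, zero_mul, add_zero, hrel]
      refine Finset.sum_congr rfl fun k hk => ?_
      rw [mem_range] at hk
      rw [if_neg (by omega)]
  have step : ∀ h, Good h → Good (cartier p h) := by
    rintro h ⟨P, hdeg, hP⟩
    set Rk : ℕ → Polynomial (ZMod p) := fun k => P 0 * a k + b * P k with hRk
    have hRkdeg : ∀ k ∈ range N, (b^(p-2) * Rk (k+1)).natDegree ≤ p * d := by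
      intro k hk
      have e1 : (b^(p-2)).natDegree ≤ (p-2) * d :=
        le_trans (Polynomial.natDegree_pow_le) (Nat.mul_le_mul_left _ hbd)
      have e2 : (Rk (k+1)).natDegree ≤ 2 * d := by
        refine le_trans (Polynomial.natDegree_add_le _ _) (max_le ?_ ?_)
        · refine le_trans (Polynomial.natDegree_mul_le) ?_
          have := add_le_add (hdeg 0) (had k hk)
          omega
        · refine le_trans (Polynomial.natDegree_mul_le) ?_
          have := add_le_add hbd (hdeg (k+1))
          omega
      calc (b^(p-2) * Rk (k+1)).natDegree
          ≤ (b^(p-2)).natDegree + (Rk (k+1)).natDegree := Polynomial.natDegree_mul_le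
        _ ≤ (p-2) * d + 2 * d := add_le_add e1 e2
        _ = ((p-2) + 2) * d := (Nat.add_mul _ _ _).symm
        _ = p * d := by congr 1; omega
    have h2 : (b : PowerSeries (ZMod p))^2 * h
        = ∑ k ∈ range N, ((Rk (k+1) : PowerSeries (ZMod p)) * u ^ (p^(k+1))) := by
      have e1 : (b : PowerSeries (ZMod p))^2 * h
          = (b : PowerSeries (ZMod p)) * ((b : PowerSeries (ZMod p)) * h) := by ring
      rw [e1, hP, Finset.sum_range_succ', mul_add, Finset.mul_sum]
      have e2 : (b : PowerSeries (ZMod p)) * ((P 0 : PowerSeries (ZMod p)) * u^(p^0))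
          = (P 0 : PowerSeries (ZMod p)) * ((b : PowerSeries (ZMod p)) * u) := by
        rw [pow_zero, pow_one]; ring
      rw [e2, hrel, Finset.mul_sum, ← Finset.sum_add_distrib]
      refine Finset.sum_congr rfl fun k hk => ?_
      have e3 : ((Rk (k+1) : Polynomial (ZMod p)) : PowerSeries (ZMod p))
          = (P 0 : PowerSeries (ZMod p)) * (a (k+1) : PowerSeries (ZMod p))
            + (b : PowerSeries (ZMod p)) * (P (k+1) : PowerSeries (ZMod p)) := by
        simp [hRk, Polynomial.coe_add, Polynomial.coe_mul]
      rw [e3]; ring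
    have h3 : (b : PowerSeries (ZMod p))^p * h
        = ∑ k ∈ range N, (((b^(p-2) * Rk (k+1) : Polynomial (ZMod p)) : PowerSeries (ZMod p))
            * u^(p^(k+1))) := by
      have e : (b : PowerSeries (ZMod p))^p
          = (b : PowerSeries (ZMod p))^(p-2) * (b : PowerSeries (ZMod p))^2 := by
        rw [← pow_add]; congr 1; omega
      rw [e, mul_assoc, h2, Finset.mul_sum]
      refine Finset.sum_congr rfl fun k hk => ?_
      rw [Polynomial.coe_mul, Polynomial.coe_pow]; ring
    have h4 : (b : PowerSeries (ZMod p)) * cartier p h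
        = ∑ k ∈ range N, ((pcart p (b^(p-2) * Rk (k+1)) : Polynomial (ZMod p))
            : PowerSeries (ZMod p)) * u^(p^k) := by
      have l1 : cartier p ((b : PowerSeries (ZMod p))^p * h)
          = (b : PowerSeries (ZMod p)) * cartier p h := by
        rw [mul_comm ((b : PowerSeries (ZMod p))^p) h, cartier_mul_pow, mul_comm]
      rw [← l1, h3, cartier_sum]
      refine Finset.sum_congr rfl fun k hk => ?_
      have e : ((b^(p-2) * Rk (k+1) : Polynomial (ZMod p)) : PowerSeries (ZMod p)) * u^(p^(k+1))
          = ((b^(p-2) * Rk (k+1) : Polynomial (ZMod p)) : PowerSeries (ZMod p)) * (u^(p^k))^p := by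
        rw [← pow_mul, pow_succ]
      rw [e, cartier_mul_pow, pcart_coe hp0]
    refine ⟨fun k => if h : k < N then pcart p (b^(p-2) * Rk (k+1)) else 0, ?_, ?_⟩
    · intro k
      dsimp only
      split_ifs with hk
      · exact pcart_natDegree_le hp0 _ d (hRkdeg k (mem_range.mpr hk))
      · simp
    · rw [Finset.sum_range_succ]
      dsimp only
      rw [dif_neg (lt_irrefl N), Polynomial.coe_zero, zero_mul, add_zero, h4]
      refine Finset.sum_congr rfl fun k hk => ?_
      rw [mem_range] at hk
      rw [dif_pos hk]
  have hiter : ∀ n, Good ((cartier p)^[n] u) := by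
    intro n
    induction n with
    | zero => exact hGood_u
    | succ n ih => rw [Function.iterate_succ_apply']; exact step _ ih
  choose P hdeg hsum using hiter
  set T : ℕ → (Fin (N+1) → Fin (d+1) → ZMod p) := fun n k j => (P n k).coeff j with hT
  obtain ⟨x, y, hxy, hTxy⟩ := Finite.exists_ne_map_eq_of_infinite T
  have key : ∀ x y, T x = T y → (cartier p)^[x] u = (cartier p)^[y] u := by
    intro x y hTe
    have hPeq : ∀ k ∈ range (N+1),
        (P x k : PowerSeries (ZMod p)) * u^(p^k) = (P y k : PowerSeries (ZMod p)) * u^(p^k) := by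
      intro k hk
      have : P x k = P y k := by
        ext j
        by_cases hj : j ≤ d
        · have := congrFun (congrFun hTe ⟨k, mem_range.mp hk⟩) ⟨j, by omega⟩
          simpa [hT] using this
        · rw [Polynomial.coeff_eq_zero_of_natDegree_lt (lt_of_le_of_lt (hdeg x k) (by omega)),
            Polynomial.coeff_eq_zero_of_natDegree_lt (lt_of_le_of_lt (hdeg y k) (by omega))]
      rw [this]
    have heq : (b : PowerSeries (ZMod p)) * (cartier p)^[x] u
        = (b : PowerSeries (ZMod p)) * (cartier p)^[y] u := by
      rw [hsum x, hsum y]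
      exact Finset.sum_congr rfl hPeq
    exact mul_left_cancel₀ (fun h0 => hb (Polynomial.coe_eq_zero_iff.mp h0)) heq
  rcases lt_or_gt_of_ne hxy with h | h
  · exact ⟨x, y, h, key x y hTxy⟩
  · exact ⟨y, x, h, key y x hTxy.symm⟩

lemma reduce' [Fact p.Prime] (g : PowerSeries (ZMod p)) :
    ∀ m (q : ℕ → Polynomial (ZMod p)), (∃ i, i ≤ m ∧ q i ≠ 0) →
    (∑ i ∈ range (m+1), (q i : PowerSeries (ZMod p)) * g^i = 0) →
    ∃ M, 1 ≤ M ∧ q M ≠ 0 ∧ ∑ i ∈ range (M+1), (q i : PowerSeries (ZMod p)) * g^i = 0 := by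
  intro m
  induction m with
  | zero =>
    rintro q ⟨i, hi, hqi⟩ hsum
    interval_cases i
    rw [Finset.sum_range_one, pow_zero, mul_one] at hsum
    exact absurd (Polynomial.coe_eq_zero_iff.mp hsum) hqi
  | succ m ih =>
    rintro q hq hsum
    by_cases hqm : q (m+1) = 0
    · refine ih q ?_ ?_
      · obtain ⟨i, hi, hqi⟩ := hq
        exact ⟨i, by rcases Nat.lt_succ_iff_lt_or_eq.mp (Nat.lt_succ_of_le hi) with h | h
                     · omega
                     · exact absurd (h ▸ hqi) (by simp [hqm]), hqi⟩
      · rw [Finset.sum_range_succ, hqm, Polynomial.coe_zero, zero_mul, add_zero] at hsum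
        exact hsum
    · exact ⟨m+1, by omega, hqm, hsum⟩

-- powers of g lie in the span of 1, g, ..., g^(M-1) after scaling by q M
lemma powers' [Fact p.Prime] (g : PowerSeries (ZMod p)) (M : ℕ) (hM : 1 ≤ M)
    (q : ℕ → Polynomial (ZMod p))
    (hrel : ∑ i ∈ range (M+1), (q i : PowerSeries (ZMod p)) * g^i = 0) (n : ℕ) :
    ∃ c : ℕ → Polynomial (ZMod p),
      ((q M : PowerSeries (ZMod p)))^n * g^n
        = ∑ i ∈ range M, (c i : PowerSeries (ZMod p)) * g^i := by
  induction n with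
  | zero =>
    refine ⟨fun i => if i = 0 then 1 else 0, ?_⟩
    rw [pow_zero, pow_zero, mul_one]
    have he : ∀ i ∈ range M,
        ((if i = 0 then (1 : Polynomial (ZMod p)) else 0 : Polynomial (ZMod p))
          : PowerSeries (ZMod p)) * g^i
        = if i = 0 then (1 : PowerSeries (ZMod p)) else 0 := by
      intro i hi
      split_ifs with h
      · subst h; simp
      · simp
    rw [Finset.sum_congr rfl he, Finset.sum_ite_eq' (range M) 0 (fun _ => (1 : PowerSeries (ZMod p)))]
    rw [if_pos (mem_range.mpr (by omega))]
  | succ n ih =>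
    obtain ⟨c, hc⟩ := ih
    have hgM : (q M : PowerSeries (ZMod p)) * g^M
        = - ∑ i ∈ range M, (q i : PowerSeries (ZMod p)) * g^i := by
      rw [Finset.sum_range_succ] at hrel
      linear_combination hrel
    set f : ℕ → PowerSeries (ZMod p) := fun i =>
      ((if i = 0 then (0 : Polynomial (ZMod p)) else q M * c (i-1)) : Polynomial (ZMod p)) * g^i
      with hf
    have hshift : ∑ i ∈ range M, ((q M * c i : Polynomial (ZMod p)) : PowerSeries (ZMod p)) * g^(i+1)
        = ∑ i ∈ range M, f i + ((q M * c (M-1) : Polynomial (ZMod p)) : PowerSeries (ZMod p)) * g^M := by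
      have e1 : ∑ i ∈ range (M+1), f i = ∑ i ∈ range M, f (i+1) + f 0 := Finset.sum_range_succ' f M
      have e2 : ∑ i ∈ range (M+1), f i = ∑ i ∈ range M, f i + f M := Finset.sum_range_succ f M
      have e3 : f 0 = 0 := by rw [hf]; simp
      have e4 : ∀ i ∈ range M, f (i+1) = ((q M * c i : Polynomial (ZMod p)) : PowerSeries (ZMod p)) * g^(i+1) := by
        intro i hi
        rw [hf]
        dsimp only
        rw [if_neg (Nat.succ_ne_zero i), Nat.add_sub_cancel]
      have e5 : f M = ((q M * c (M-1) : Polynomial (ZMod p)) : PowerSeries (ZMod p)) * g^M := by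
        rw [hf]
        dsimp only
        rw [if_neg (by omega : ¬ M = 0)]
      rw [← Finset.sum_congr rfl e4, ← e5]
      calc ∑ i ∈ range M, f (i+1) = ∑ i ∈ range (M+1), f i - f 0 := by rw [e1, e3]; ring
        _ = ∑ i ∈ range M, f i + f M := by rw [e2, e3]; ring
    refine ⟨fun i => (if i = 0 then 0 else q M * c (i-1)) - c (M-1) * q i, ?_⟩
    have expand : ∀ i ∈ range M,
        ((((if i = 0 then 0 else q M * c (i-1)) - c (M-1) * q i : Polynomial (ZMod p)))
          : PowerSeries (ZMod p)) * g^i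
        = f i - ((c (M-1) * q i : Polynomial (ZMod p)) : PowerSeries (ZMod p)) * g^i := by
      intro i hi
      rw [Polynomial.coe_sub, sub_mul, hf]
    rw [Finset.sum_congr rfl expand, Finset.sum_sub_distrib]
    have lhs1 : ((q M : PowerSeries (ZMod p)))^(n+1) * g^(n+1)
        = ∑ i ∈ range M, ((q M * c i : Polynomial (ZMod p)) : PowerSeries (ZMod p)) * g^(i+1) := by
      have : ((q M : PowerSeries (ZMod p)))^(n+1) * g^(n+1)
          = ((q M : PowerSeries (ZMod p)) * g) * (((q M : PowerSeries (ZMod p)))^n * g^n) := by ring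
      rw [this, hc, Finset.mul_sum]
      refine Finset.sum_congr rfl fun i hi => ?_
      rw [Polynomial.coe_mul]
      ring
    rw [lhs1, hshift]
    have last : ((q M * c (M-1) : Polynomial (ZMod p)) : PowerSeries (ZMod p)) * g^M
        = - ∑ i ∈ range M, ((c (M-1) * q i : Polynomial (ZMod p)) : PowerSeries (ZMod p)) * g^i := by
      rw [Polynomial.coe_mul]
      have : (q M : PowerSeries (ZMod p)) * (c (M-1) : PowerSeries (ZMod p)) * g^M
          = (c (M-1) : PowerSeries (ZMod p)) * ((q M : PowerSeries (ZMod p)) * g^M) := by ring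
      rw [this, hgM, mul_neg, Finset.mul_sum, neg_inj]
      refine Finset.sum_congr rfl fun i hi => ?_
      rw [Polynomial.coe_mul]
      ring
    rw [last]
    ring

set_option synthInstance.maxHeartbeats 1000000 in
lemma exists_ore [hp : Fact p.Prime] (g : PowerSeries (ZMod p)) (M : ℕ) (hM : 1 ≤ M)
    (q : ℕ → Polynomial (ZMod p)) (hqM : q M ≠ 0)
    (hrel : ∑ i ∈ range (M+1), (q i : PowerSeries (ZMod p)) * g^i = 0) :
    ∃ (j0 N : ℕ) (b : Polynomial (ZMod p)) (a : ℕ → Polynomial (ZMod p)), b ≠ 0 ∧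
      (b : PowerSeries (ZMod p)) * g^(p^j0)
        = ∑ k ∈ range N, ((a (k+1) : PowerSeries (ZMod p)) * (g^(p^j0)) ^ (p^(k+1))) := by
  choose c hc using powers' g M hM q hrel
  set A : Fin (M+1) → (Fin M → (RatFunc (ZMod p))) :=
    fun j i => algebraMap (Polynomial (ZMod p)) (RatFunc (ZMod p)) (c (p^(j:ℕ)) (i:ℕ)) with hA
  have hni : ¬ LinearIndependent (RatFunc (ZMod p)) A := by
    intro hli
    have hcard := hli.fintype_card_le_finrank
    rw [Module.finrank_pi] at hcard
    simp only [Fintype.card_fin] at hcard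
    omega
  obtain ⟨β, hβsum, j₁, hj₁⟩ := Fintype.not_linearIndependent_iff.mp hni
  set B : Fin (M+1) → Polynomial (ZMod p) :=
    fun j => (β j).num * ∏ j' ∈ Finset.univ.erase j, (β j').denom with hB
  have hkey : ∀ j, algebraMap (Polynomial (ZMod p)) (RatFunc (ZMod p)) (B j)
      = β j * algebraMap (Polynomial (ZMod p)) (RatFunc (ZMod p)) (∏ j' : Fin (M+1), (β j').denom) := by
    intro j
    rw [hB]
    dsimp only
    rw [map_mul, map_prod, map_prod,
      ← Finset.mul_prod_erase Finset.univ _ (Finset.mem_univ j)]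
    have hnum : algebraMap (Polynomial (ZMod p)) (RatFunc (ZMod p)) ((β j).num)
        = β j * algebraMap (Polynomial (ZMod p)) (RatFunc (ZMod p)) ((β j).denom) := by
      have hd : algebraMap (Polynomial (ZMod p)) (RatFunc (ZMod p)) ((β j).denom) ≠ 0 :=
        RatFunc.algebraMap_ne_zero (RatFunc.denom_ne_zero _)
      have hnd := RatFunc.num_div_denom (β j)
      rw [div_eq_iff hd] at hnd
      rw [hnd]
    rw [hnum]
    ring
  have hBi : ∀ i : Fin M, ∑ j : Fin (M+1), B j * c (p^(j:ℕ)) (i:ℕ) = 0 := by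
    intro i
    apply RatFunc.algebraMap_injective (ZMod p)
    rw [map_sum, map_zero]
    have he : ∀ j ∈ (Finset.univ : Finset (Fin (M+1))),
        algebraMap (Polynomial (ZMod p)) (RatFunc (ZMod p)) (B j * c (p^(j:ℕ)) (i:ℕ))
        = (algebraMap (Polynomial (ZMod p)) (RatFunc (ZMod p)) (∏ j' : Fin (M+1), (β j').denom))
            * (β j * A j i) := by
      intro j _
      rw [map_mul, hkey j, hA]
      ring
    rw [Finset.sum_congr rfl he, ← Finset.mul_sum]
    have h0 : ∑ j : Fin (M+1), β j * A j i = 0 := by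
      have h1 := congrFun hβsum i
      rw [Finset.sum_apply] at h1
      simp only [Pi.smul_apply, smul_eq_mul, Pi.zero_apply] at h1
      exact h1
    rw [h0, mul_zero]
  have hBj₁ : B j₁ ≠ 0 := by
    rw [hB]
    exact mul_ne_zero (RatFunc.num_ne_zero hj₁)
      (Finset.prod_ne_zero_iff.mpr fun j' _ => RatFunc.denom_ne_zero _)
  have hfin : ∑ j : Fin (M+1),
      ((B j * (q M)^(p^(j:ℕ)) : Polynomial (ZMod p)) : PowerSeries (ZMod p)) * g^(p^(j:ℕ)) = 0 := by
    have e : ∀ j ∈ (Finset.univ : Finset (Fin (M+1))),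
        ((B j * (q M)^(p^(j:ℕ)) : Polynomial (ZMod p)) : PowerSeries (ZMod p)) * g^(p^(j:ℕ))
        = ∑ i ∈ range M,
            ((B j * c (p^(j:ℕ)) i : Polynomial (ZMod p)) : PowerSeries (ZMod p)) * g^i := by
      intro j _
      rw [Polynomial.coe_mul, Polynomial.coe_pow, mul_assoc, hc (p^(j:ℕ)), Finset.mul_sum]
      refine Finset.sum_congr rfl fun i hi => ?_
      simp only [Polynomial.coe_mul]
      ring
    rw [Finset.sum_congr rfl e, Finset.sum_comm]
    refine Finset.sum_eq_zero fun i hi => ?_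
    have hcoe : ∑ j : Fin (M+1),
        ((B j * c (p^(j:ℕ)) i : Polynomial (ZMod p)) : PowerSeries (ZMod p)) * g^i
        = ((∑ j : Fin (M+1), B j * c (p^(j:ℕ)) i : Polynomial (ZMod p)) : PowerSeries (ZMod p)) * g^i := by
      rw [← Finset.sum_mul]
      congr 1
      rw [← Polynomial.coeToPowerSeries.ringHom_apply, map_sum]
      refine Finset.sum_congr rfl fun j _ => ?_
      rw [Polynomial.coeToPowerSeries.ringHom_apply]
    rw [hcoe]
    have := hBi ⟨i, mem_range.mp hi⟩
    simp only [Fin.val_mk] at this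
    rw [this, Polynomial.coe_zero, zero_mul]
  set b' : ℕ → Polynomial (ZMod p) :=
    fun j => if h : j < M+1 then B ⟨j, h⟩ * (q M)^(p^j) else 0 with hb'
  have hrange : ∑ j ∈ range (M+1), (b' j : PowerSeries (ZMod p)) * g^(p^j) = 0 := by
    rw [Finset.sum_range fun j => (b' j : PowerSeries (ZMod p)) * g^(p^j)]
    rw [← hfin]
    refine Finset.sum_congr rfl fun j _ => ?_
    rw [hb']
    dsimp only
    rw [dif_pos j.isLt]
  have hex : ∃ j, b' j ≠ 0 := by
    refine ⟨(j₁ : ℕ), ?_⟩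
    rw [hb']
    dsimp only
    rw [dif_pos j₁.isLt]
    simp only [Fin.eta]
    exact mul_ne_zero hBj₁ (pow_ne_zero _ hqM)
  set j0 := Nat.find hex with hj0
  have hb0 : b' j0 ≠ 0 := Nat.find_spec hex
  have hj0M : j0 ≤ M := by
    have := Nat.find_min' hex hex.choose_spec
    have h2 : j0 ≤ (j₁ : ℕ) := Nat.find_min' hex (by
      rw [hb']
      dsimp only
      rw [dif_pos j₁.isLt]
      simp only [Fin.eta]
      exact mul_ne_zero hBj₁ (pow_ne_zero _ hqM))
    omega
  have hmin : ∀ j < j0, b' j = 0 := fun j hj => not_not.mp (Nat.find_min hex hj)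
  have hsplit : ∑ j ∈ Finset.Ico j0 (M+1), (b' j : PowerSeries (ZMod p)) * g^(p^j) = 0 := by
    have h := hrange
    rw [Finset.range_eq_Ico,
      ← Finset.sum_Ico_consecutive _ (Nat.zero_le j0) (by omega : j0 ≤ M+1)] at h
    have hz : ∑ j ∈ Finset.Ico 0 j0, (b' j : PowerSeries (ZMod p)) * g^(p^j) = 0 :=
      Finset.sum_eq_zero fun j hj => by
        rw [hmin j (Finset.mem_Ico.mp hj).2, Polynomial.coe_zero, zero_mul]
    rw [hz, zero_add] at h
    exact h
  rw [Finset.sum_Ico_eq_sum_range] at hsplit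
  have hM1 : M + 1 - j0 = (M - j0) + 1 := by omega
  rw [hM1, Finset.sum_range_succ'] at hsplit
  simp only [Nat.add_zero] at hsplit
  refine ⟨j0, M - j0, b' j0, fun k => -b' (j0 + k), hb0, ?_⟩
  have hRHS : ∑ k ∈ range (M - j0),
      ((-b' (j0 + (k+1)) : Polynomial (ZMod p)) : PowerSeries (ZMod p)) * (g^(p^j0))^(p^(k+1))
      = - ∑ k ∈ range (M - j0), (b' (j0 + (k+1)) : PowerSeries (ZMod p)) * g^(p^(j0 + (k+1))) := by
    rw [← Finset.sum_neg_distrib]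
    refine Finset.sum_congr rfl fun k hk => ?_
    rw [Polynomial.coe_neg, ← pow_mul, ← pow_add, neg_mul]
  rw [hRHS]
  linear_combination hsplit


lemma cartier_iter_pow [Fact p.Prime] (g : PowerSeries (ZMod p)) :
    ∀ j, (cartier p)^[j] (g^(p^j)) = g := by
  intro j
  induction j with
  | zero => simp
  | succ j ih =>
    rw [Function.iterate_succ_apply]
    have e : g^(p^(j+1)) = (g^(p^j))^p := by rw [← pow_mul, pow_succ]
    rw [e, cartier_pow_p, ih]

/-- If `g ∈ 𝔽_p[[z]]` is algebraic over `𝔽_p(z)`, i.e. annihilates a nonzero polynomial with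
polynomial coefficients, then there is an integer `l > 0` with `Λ_p^{2l}(g) = Λ_p^{l}(g)`. -/
theorem stmt3 (p : ℕ) (hp : p.Prime) (g : PowerSeries (ZMod p)) (m : ℕ)
    (q : ℕ → Polynomial (ZMod p)) (hq : ∃ i, i ≤ m ∧ q i ≠ 0)
    (halg : ∑ i ∈ Finset.range (m + 1), ((q i : PowerSeries (ZMod p)) * g ^ i) = 0) :
    ∃ l : ℕ, 0 < l ∧ (cartier p)^[2 * l] g = (cartier p)^[l] g := by
  haveI : Fact p.Prime := ⟨hp⟩
  obtain ⟨M, hM1, hqM, hrelM⟩ := reduce' g m q hq halg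
  obtain ⟨j0, N, b, a, hb, hore⟩ := exists_ore g M hM1 q hqM hrelM
  obtain ⟨i, j, hij, hiter⟩ := ore_periodic (g^(p^j0)) b a N hb hore
  have hg : (cartier p)^[j0] (g^(p^j0)) = g := cartier_iter_pow g j0
  have hijg : (cartier p)^[i] g = (cartier p)^[j] g := by
    have h1 : (cartier p)^[i] g = (cartier p)^[i + j0] (g^(p^j0)) := by
      rw [Function.iterate_add_apply, hg]
    have h2 : (cartier p)^[j] g = (cartier p)^[j + j0] (g^(p^j0)) := by
      rw [Function.iterate_add_apply, hg]
    rw [h1, h2, Nat.add_comm i j0, Nat.add_comm j j0, Function.iterate_add_apply,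
      Function.iterate_add_apply, hiter]
  set t := j - i with ht
  have htpos : 0 < t := by omega
  have hstep : ∀ n, (cartier p)^[(i+n) + t] g = (cartier p)^[i+n] g := by
    intro n
    induction n with
    | zero =>
      have e : i + 0 + t = j := by omega
      rw [e, Nat.add_zero]
      exact hijg.symm
    | succ n ihn =>
      have e1 : i + (n+1) + t = (i + n + t) + 1 := by omega
      have e2 : i + (n+1) = (i + n) + 1 := by omega
      rw [e1, e2, Function.iterate_succ_apply', Function.iterate_succ_apply', ihn]
  have hmulti : ∀ s n, (cartier p)^[(i+n) + s * t] g = (cartier p)^[i+n] g := by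
    intro s
    induction s with
    | zero => intro n; simp
    | succ s ihs =>
      intro n
      have et : (s+1)*t = s*t + t := by ring
      have e : i + n + (s+1)*t = (i + (n + s*t)) + t := by rw [et]; omega
      rw [e, hstep (n + s*t)]
      have e2 : i + (n + s*t) = (i+n) + s*t := by omega
      rw [e2]
      exact ihs n
  refine ⟨(i+1)*t, Nat.mul_pos (by omega) htpos, ?_⟩
  have hli : i ≤ (i+1)*t := le_trans (Nat.le_succ i) (Nat.le_mul_of_pos_right _ htpos)
  have key := hmulti (i+1) ((i+1)*t - i)
  have e2 : i + ((i+1)*t - i) = (i+1)*t := by omega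
  rw [e2] at key
  have e3 : 2 * ((i+1)*t) = (i+1)*t + (i+1)*t := by ring
  rw [e3]
  exact key
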